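/- The eigenvalues of the n×n matrix R(i,j) = C(i-1, n-j) are exactly { (-1)^{n+j} a^{2j-n-1} : 1 ≤ j ≤ n } where a = (1+√5)/2; in particular R is diagonalizable over ℝ. -/

import Mathlib

open Polynomial Finset Matrix

private noncomputable def hE (A B : ℝ[X]) (d : ℕ) (q : ℝ[X]) : ℝ[X] :=
  ∑ j ∈ Finset.range (d + 1), Polynomial.C (q.coeff j) * (A ^ j * B ^ (d - j))

private lemma hE_cast (A B : ℝ[X]) (hB : B ≠ 0) (d : ℕ) (q : ℝ[X]) (hq : q.natDegree ≤ d) :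
    algebraMap ℝ[X] (RatFunc ℝ) (hE A B d q)
      = (algebraMap ℝ[X] (RatFunc ℝ) B) ^ d *
        Polynomial.eval₂ ((algebraMap ℝ[X] (RatFunc ℝ)).comp Polynomial.C)
          (algebraMap ℝ[X] (RatFunc ℝ) A / algebraMap ℝ[X] (RatFunc ℝ) B) q := by
  have hB' : algebraMap ℝ[X] (RatFunc ℝ) B ≠ 0 :=
    (map_ne_zero_iff _ (RatFunc.algebraMap_injective ℝ)).mpr hB
  rw [hE, map_sum, Polynomial.eval₂_eq_sum_range' _ (Nat.lt_succ_of_le hq), Finset.mul_sum]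
  refine Finset.sum_congr rfl fun j hj => ?_
  have hjd : j ≤ d := Nat.lt_succ_iff.mp (Finset.mem_range.mp hj)
  rw [_root_.map_mul, _root_.map_mul, _root_.map_pow, _root_.map_pow, RingHom.comp_apply, div_pow]
  field_simp
  have h1 : d - j + j = d := by omega
  rw [← h1, pow_add]
  ring_nf
  have h2 : j + (d - j) - j = d - j := by omega
  rw [h2]

private lemma hE_mul (A B : ℝ[X]) (hB : B ≠ 0) (d e : ℕ) (q r : ℝ[X])
    (hq : q.natDegree ≤ d) (hr : r.natDegree ≤ e) :
    hE A B (d + e) (q * r) = hE A B d q * hE A B e r := by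
  apply RatFunc.algebraMap_injective ℝ
  have hqr : (q * r).natDegree ≤ d + e :=
    Polynomial.natDegree_mul_le.trans (add_le_add hq hr)
  rw [_root_.map_mul, hE_cast A B hB d q hq, hE_cast A B hB e r hr, hE_cast A B hB (d+e) (q*r) hqr,
    Polynomial.eval₂_mul, pow_add]
  ring

private lemma hE_pow (A B : ℝ[X]) (hB : B ≠ 0) (p : ℝ[X]) (hp : p.natDegree ≤ 1) :
    ∀ k : ℕ, hE A B k (p ^ k) = (hE A B 1 p) ^ k := by
  intro k
  induction k with
  | zero => simp [hE]
  | succ k ih =>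
    have hpk : (p ^ k).natDegree ≤ k :=
      Polynomial.natDegree_pow_le.trans (by
        calc k * p.natDegree ≤ k * 1 := Nat.mul_le_mul_left k hp
        _ = k := Nat.mul_one k)
    rw [pow_succ, pow_succ, ← ih, ← hE_mul A B hB k 1 (p ^ k) p hpk hp]

private lemma hE_linear (A B : ℝ[X]) (α β : ℝ) :
    hE A B 1 (Polynomial.C α * X + Polynomial.C β) = Polynomial.C β * B + Polynomial.C α * A := by
  rw [hE, Finset.sum_range_succ, Finset.sum_range_one]
  simp [coeff_C_mul]

private noncomputable def Sf (n : ℕ) (α β γ δ : ℝ) : Matrix (Fin n) (Fin n) ℝ :=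
  Matrix.of fun i k =>
    ((Polynomial.C α * X + Polynomial.C β) ^ (k : ℕ) *
      (Polynomial.C γ * X + Polynomial.C δ) ^ (n - 1 - (k : ℕ))).coeff i

private lemma symMul (n : ℕ) (hn : 1 ≤ n) (α₁ β₁ γ₁ δ₁ α₂ β₂ γ₂ δ₂ : ℝ)
    (hB : (Polynomial.C γ₁ * X + Polynomial.C δ₁ : ℝ[X]) ≠ 0) :
    Sf n α₁ β₁ γ₁ δ₁ * Sf n α₂ β₂ γ₂ δ₂ =
      Sf n (α₂*α₁+β₂*γ₁) (α₂*β₁+β₂*δ₁) (γ₂*α₁+δ₂*γ₁) (γ₂*β₁+δ₂*δ₁) := by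
  ext i k
  set A₁ : ℝ[X] := Polynomial.C α₁ * X + Polynomial.C β₁ with hA₁
  set B₁ : ℝ[X] := Polynomial.C γ₁ * X + Polynomial.C δ₁ with hB₁
  set A₂ : ℝ[X] := Polynomial.C α₂ * X + Polynomial.C β₂ with hA₂
  set B₂ : ℝ[X] := Polynomial.C γ₂ * X + Polynomial.C δ₂ with hB₂
  set q : ℝ[X] := A₂ ^ (k : ℕ) * B₂ ^ (n - 1 - (k : ℕ)) with hq
  have hk : (k : ℕ) ≤ n - 1 := by omega
  have step1 : (Sf n α₁ β₁ γ₁ δ₁ * Sf n α₂ β₂ γ₂ δ₂) i k = (hE A₁ B₁ (n-1) q).coeff i := by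
    rw [Matrix.mul_apply, hE, Polynomial.finset_sum_coeff,
      show n - 1 + 1 = n from by omega,
      ← Fin.sum_univ_eq_sum_range
        (fun j => (Polynomial.C (q.coeff j) * (A₁ ^ j * B₁ ^ (n - 1 - j))).coeff i) n]
    refine Finset.sum_congr rfl fun j _ => ?_
    simp only [Sf, Matrix.of_apply, Polynomial.coeff_C_mul, ← hA₁, ← hB₁, ← hA₂, ← hB₂, ← hq]
    ring
  have hdA : A₂.natDegree ≤ 1 := Polynomial.natDegree_linear_le
  have hdB : B₂.natDegree ≤ 1 := Polynomial.natDegree_linear_le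
  have hdAk : (A₂ ^ (k : ℕ)).natDegree ≤ (k : ℕ) :=
    Polynomial.natDegree_pow_le.trans (by nlinarith)
  have hdBk : (B₂ ^ (n - 1 - (k : ℕ))).natDegree ≤ n - 1 - (k : ℕ) :=
    Polynomial.natDegree_pow_le.trans (by nlinarith)
  have step2 : hE A₁ B₁ (n-1) q
      = (Polynomial.C β₂ * B₁ + Polynomial.C α₂ * A₁) ^ (k : ℕ) *
        (Polynomial.C δ₂ * B₁ + Polynomial.C γ₂ * A₁) ^ (n - 1 - (k : ℕ)) := by
    rw [show n - 1 = (k : ℕ) + (n - 1 - (k : ℕ)) from by omega]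
    rw [hq, hE_mul A₁ B₁ hB _ _ _ _ hdAk hdBk,
      hE_pow A₁ B₁ hB A₂ hdA, hE_pow A₁ B₁ hB B₂ hdB,
      hA₂, hB₂, hE_linear, hE_linear]
    have h3 : (k : ℕ) + (n - 1 - (k : ℕ)) - (k : ℕ) = n - 1 - (k : ℕ) := by omega
    rw [h3]
  rw [step1, step2]
  have e1 : (Polynomial.C β₂ * B₁ + Polynomial.C α₂ * A₁ : ℝ[X])
      = Polynomial.C (α₂*α₁+β₂*γ₁) * X + Polynomial.C (α₂*β₁+β₂*δ₁) := by
    rw [hA₁, hB₁]; simp only [Polynomial.C_add, Polynomial.C_mul]; ring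
  have e2 : (Polynomial.C δ₂ * B₁ + Polynomial.C γ₂ * A₁ : ℝ[X])
      = Polynomial.C (γ₂*α₁+δ₂*γ₁) * X + Polynomial.C (γ₂*β₁+δ₂*δ₁) := by
    rw [hA₁, hB₁]; simp only [Polynomial.C_add, Polynomial.C_mul]; ring
  rw [e1, e2]
  rfl

private lemma SfId (n : ℕ) : Sf n 1 0 0 1 = 1 := by
  ext i k
  simp only [Sf, Matrix.of_apply, Polynomial.C_1, Polynomial.C_0, one_mul, mul_zero, zero_mul,
    zero_add, add_zero, mul_one, one_pow, Polynomial.coeff_X_pow, Matrix.one_apply]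
  by_cases h : i = k
  · simp [h]
  · have : (i : ℕ) ≠ (k : ℕ) := fun hh => h (Fin.ext hh)
    simp [h, this]

private lemma Sf1110 (n : ℕ) (i k : Fin n) :
    Sf n 1 1 1 0 i k = (Nat.choose (k : ℕ) (n - 1 - (i : ℕ)) : ℝ) := by
  simp only [Sf, Matrix.of_apply, Polynomial.C_1, Polynomial.C_0, one_mul, add_zero]
  rw [Polynomial.coeff_mul_X_pow']
  by_cases h : n - 1 - (k : ℕ) ≤ (i : ℕ)
  · rw [if_pos h, Polynomial.coeff_X_add_one_pow]
    have h1 : n - 1 - (i : ℕ) ≤ (k : ℕ) := by omega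
    have h2 : (i : ℕ) - (n - 1 - (k : ℕ)) = (k : ℕ) - (n - 1 - (i : ℕ)) := by omega
    rw [h2, Nat.choose_symm h1]
  · rw [if_neg h]
    have : (k : ℕ) < n - 1 - (i : ℕ) := by omega
    rw [Nat.choose_eq_zero_of_lt this]
    simp


/-- The eigenvalues of the right-justified Pascal matrix `R(i,j) = C(i-1,n-j)` are
exactly `(-1)^{n+j} a^{2j-n-1}`, `1 ≤ j ≤ n`, with `a` the golden ratio; in
particular `R` is diagonalizable over `ℝ`. -/
theorem stmt11 (n : ℕ) (hn : 1 ≤ n) (a : ℝ) (ha : a = (1 + Real.sqrt 5) / 2)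
    (R : Matrix (Fin n) (Fin n) ℝ)
    (hR : ∀ i j : Fin n, R i j = (Nat.choose i.1 (n - (j.1 + 1)) : ℝ)) :
    spectrum ℝ R =
        (fun j : ℕ => (-1 : ℝ) ^ (n + j) * a ^ (2 * (j : ℤ) - (n : ℤ) - 1)) ''
          (Set.Icc 1 n) ∧
      ∃ P : Matrix (Fin n) (Fin n) ℝ, IsUnit P.det ∧
        P⁻¹ * R * P = Matrix.diagonal (fun j : Fin n =>
          (-1 : ℝ) ^ (n + (j.1 + 1)) * a ^ (2 * ((j.1 : ℤ) + 1) - (n : ℤ) - 1)) := by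
  -- scalar facts
  have hs2 : Real.sqrt 5 ^ 2 = 5 := Real.sq_sqrt (by norm_num)
  have hs0 : 0 < Real.sqrt 5 := Real.sqrt_pos.mpr (by norm_num)
  set s : ℝ := Real.sqrt 5 with hsdef
  set b : ℝ := (1 - s) / 2 with hbdef
  have hab : a * b = -1 := by rw [ha, hbdef]; nlinarith
  have ha2 : a * a = a + 1 := by rw [ha]; nlinarith
  have hb2 : b * b = b + 1 := by rw [hbdef]; nlinarith
  have hamb : a - b = s := by rw [ha, hbdef]; ring
  have ha0 : 0 < a := by rw [ha]; nlinarith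
  have hane : a ≠ 0 := ne_of_gt ha0
  have hsne : s ≠ 0 := ne_of_gt hs0
  -- matrices
  set Pm := Sf n a 1 b 1 with hPm
  set dv : Fin n → ℝ := fun k => a ^ (k : ℕ) * b ^ (n - 1 - (k : ℕ)) with hdv
  have hBX : (Polynomial.C (1:ℝ) * Polynomial.X + Polynomial.C (0:ℝ) : ℝ[X]) ≠ 0 := by
    intro h
    have := congrArg (fun p => Polynomial.coeff p 1) h
    simp at this
  have hBb : (Polynomial.C b * Polynomial.X + Polynomial.C (1:ℝ) : ℝ[X]) ≠ 0 := by
    intro h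
    have := congrArg (fun p => Polynomial.coeff p 0) h
    simp at this
  -- S1 * Pm = Pm * D
  have h1 : Sf n 1 1 1 0 * Pm = Sf n (a+1) a (b+1) b := by
    rw [hPm, symMul n hn 1 1 1 0 a 1 b 1 hBX]
    norm_num
  have h3 : Pm * Matrix.diagonal dv = Sf n (a*a) a (b*b) b := by
    ext i k
    rw [Matrix.mul_diagonal]
    have ea : (Polynomial.C (a*a) * Polynomial.X + Polynomial.C a : ℝ[X])
        = Polynomial.C a * (Polynomial.C a * Polynomial.X + Polynomial.C 1) := by
      simp only [Polynomial.C_mul, Polynomial.C_1]; ring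
    have eb : (Polynomial.C (b*b) * Polynomial.X + Polynomial.C b : ℝ[X])
        = Polynomial.C b * (Polynomial.C b * Polynomial.X + Polynomial.C 1) := by
      simp only [Polynomial.C_mul, Polynomial.C_1]; ring
    simp only [Sf, Matrix.of_apply, hPm, hdv]
    rw [ea, eb, mul_pow, mul_pow, ← Polynomial.C_pow, ← Polynomial.C_pow,
      show (Polynomial.C (a ^ (k:ℕ)) * (Polynomial.C a * Polynomial.X + Polynomial.C 1) ^ (k:ℕ) *
        (Polynomial.C (b ^ (n-1-(k:ℕ))) * (Polynomial.C b * Polynomial.X + Polynomial.C 1) ^ (n-1-(k:ℕ))) : ℝ[X])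
        = Polynomial.C (a ^ (k:ℕ) * b ^ (n-1-(k:ℕ))) *
          ((Polynomial.C a * Polynomial.X + Polynomial.C 1) ^ (k:ℕ) *
           (Polynomial.C b * Polynomial.X + Polynomial.C 1) ^ (n-1-(k:ℕ))) from by
        rw [Polynomial.C_mul]; ring,
      Polynomial.coeff_C_mul]
    ring
  have hSP : Sf n 1 1 1 0 * Pm = Pm * Matrix.diagonal dv := by
    rw [h1, h3, ← ha2, ← hb2]
  -- Pm * Nm = 1
  have h2 : Pm * Sf n (1/s) (-1/s) (-b/s) (a/s) = 1 := by
    rw [hPm, symMul n hn a 1 b 1 (1/s) (-1/s) (-b/s) (a/s) hBb]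
    have e1 : 1/s*a + -1/s*b = 1 := by field_simp; linarith
    have e2 : 1/s*1 + -1/s*1 = 0 := by ring
    have e3 : -b/s*a + a/s*b = 0 := by field_simp; ring
    have e4 : -b/s*1 + a/s*1 = 1 := by field_simp; linear_combination hamb
    rw [e1, e2, e3, e4, SfId]
  -- transpose
  have hS1 : R.transpose = Sf n 1 1 1 0 := by
    ext i k
    rw [Matrix.transpose_apply, hR k i, Sf1110 n i k,
      show n - ((i:ℕ) + 1) = n - 1 - (i:ℕ) from by omega]
  have hQR : Pm.transpose * R = Matrix.diagonal dv * Pm.transpose := by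
    have := congrArg Matrix.transpose hSP
    rwa [Matrix.transpose_mul, Matrix.transpose_mul, ← hS1, Matrix.transpose_transpose,
      Matrix.diagonal_transpose] at this
  have hQinv : (Sf n (1/s) (-1/s) (-b/s) (a/s)).transpose * Pm.transpose = 1 := by
    rw [← Matrix.transpose_mul, h2, Matrix.transpose_one]
  have hdet : IsUnit Pm.transpose.det := Matrix.isUnit_det_of_left_inverse hQinv
  set Q := Pm.transpose with hQ
  -- diagonal entries
  have hbinv : b = -a⁻¹ := by field_simp; linarith
  have hd : ∀ j : Fin n, dv j
      = (-1 : ℝ) ^ (n + ((j:ℕ) + 1)) * a ^ (2 * (((j:ℕ) : ℤ) + 1) - (n : ℤ) - 1) := by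
    intro j
    have hjn : (j : ℕ) < n := j.isLt
    rw [hdv]
    show a ^ (j:ℕ) * b ^ (n - 1 - (j:ℕ)) = _
    rw [hbinv, neg_pow, show n + ((j:ℕ) + 1) = (n - 1 - (j:ℕ)) + 2 * ((j:ℕ) + 1) from by omega,
      pow_add, pow_mul, neg_one_sq, one_pow, mul_one]
    rw [show (2 * (((j:ℕ) : ℤ) + 1) - (n : ℤ) - 1) = ((j:ℕ) : ℤ) - ((n - 1 - (j:ℕ) : ℕ) : ℤ) from by
      push_cast; omega]
    rw [zpow_sub₀ hane, zpow_natCast, zpow_natCast, inv_pow]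
    ring
  constructor
  · -- spectrum
    have hR' : R = Q⁻¹ * (Matrix.diagonal dv * Q) := by
      rw [← hQR, ← Matrix.mul_assoc, Matrix.nonsing_inv_mul Q hdet, Matrix.one_mul]
    ext x
    rw [spectrum.mem_iff, Matrix.isUnit_iff_isUnit_det]
    have key : algebraMap ℝ (Matrix (Fin n) (Fin n) ℝ) x - R
        = Q⁻¹ * ((algebraMap ℝ (Matrix (Fin n) (Fin n) ℝ) x - Matrix.diagonal dv) * Q) := by
      rw [Matrix.sub_mul, Matrix.mul_sub, Algebra.commutes x Q, ← Matrix.mul_assoc,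
        Matrix.nonsing_inv_mul Q hdet, Matrix.one_mul, ← hR']
    have hdet1 : Q⁻¹.det * Q.det = 1 := by
      rw [← Matrix.det_mul, Matrix.nonsing_inv_mul Q hdet, Matrix.det_one]
    have hdiag : algebraMap ℝ (Matrix (Fin n) (Fin n) ℝ) x - Matrix.diagonal dv
        = Matrix.diagonal (fun j => x - dv j) := by
      rw [Matrix.algebraMap_eq_diagonal, Matrix.diagonal_sub]
      congr 1
    have hdetval : (algebraMap ℝ (Matrix (Fin n) (Fin n) ℝ) x - R).det
        = ∏ j : Fin n, (x - dv j) := by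
      rw [key, Matrix.det_mul, Matrix.det_mul, hdiag, Matrix.det_diagonal]
      calc Q⁻¹.det * ((∏ j : Fin n, (x - dv j)) * Q.det)
          = (Q⁻¹.det * Q.det) * ∏ j : Fin n, (x - dv j) := by ring
        _ = ∏ j : Fin n, (x - dv j) := by rw [hdet1, one_mul]
    rw [hdetval, isUnit_iff_ne_zero, not_ne_iff, Finset.prod_eq_zero_iff]
    constructor
    · rintro ⟨j, -, hj⟩
      refine ⟨(j : ℕ) + 1, ⟨by omega, by omega⟩, ?_⟩
      have : dv j = x := by linarith [sub_eq_zero.mp hj]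
      rw [← this, hd j]
      push_cast
      ring_nf
    · rintro ⟨jj, ⟨hj1, hj2⟩, hjx⟩
      refine ⟨⟨jj - 1, by omega⟩, Finset.mem_univ _, ?_⟩
      have : dv ⟨jj - 1, by omega⟩ = x := by
        rw [← hjx, hd ⟨jj - 1, by omega⟩]
        show (-1 : ℝ) ^ (n + ((jj - 1) + 1)) * a ^ (2 * (((jj - 1 : ℕ) : ℤ) + 1) - (n : ℤ) - 1) = _
        rw [show (jj - 1) + 1 = jj from by omega,
          show (2 * (((jj - 1 : ℕ) : ℤ) + 1) - (n : ℤ) - 1) = (2 * (jj : ℤ) - (n : ℤ) - 1) from by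
            push_cast; omega]
      rw [this, sub_self]
  · -- diagonalization
    refine ⟨Q⁻¹, ?_, ?_⟩
    · rw [Matrix.det_nonsing_inv, Ring.inverse_eq_inv']
      exact isUnit_iff_ne_zero.mpr (inv_ne_zero (IsUnit.ne_zero hdet))
    · rw [Matrix.nonsing_inv_nonsing_inv Q hdet, hQR, Matrix.mul_assoc,
        Matrix.mul_nonsing_inv Q hdet, Matrix.mul_one, ← funext hd]
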